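/- Let λ > 0 and r₊, a, q be reals with λa² < 1 and 1 − λr₊² > 0, satisfying the constraint a² = (r₊²(1 + 3λr₊²) − q²)/(1 − λr₊²). Define Ξ = 1 − λa², J = r₊(1 + 2λr₊² + λa²)a/Ξ², Q = q/Ξ, Ā_E = (r₊² + a²)/Ξ. Then 4J² + Q⁴ = Ā_E²[1 + 2λ(2Ā_E + Q²) + 3λ²Ā_E²]. -/

import Mathlib

theorem stmt_7 (lam rp a q Ξ J Q AE : ℝ) (hlam : 0 < lam)
    (ha : lam * a ^ 2 < 1) (hr : 1 - lam * rp ^ 2 > 0)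
    (hcon : a ^ 2 = (rp ^ 2 * (1 + 3 * lam * rp ^ 2) - q ^ 2) / (1 - lam * rp ^ 2))
    (hΞ : Ξ = 1 - lam * a ^ 2)
    (hJ : J = rp * (1 + 2 * lam * rp ^ 2 + lam * a ^ 2) * a / Ξ ^ 2)
    (hQ : Q = q / Ξ) (hAE : AE = (rp ^ 2 + a ^ 2) / Ξ) :
    4 * J ^ 2 + Q ^ 4 = AE ^ 2 * (1 + 2 * lam * (2 * AE + Q ^ 2) + 3 * lam ^ 2 * AE ^ 2) := by
  have hΞ0 : Ξ ≠ 0 := by rw [hΞ]; linarith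
  have hr0 : (1 - lam * rp ^ 2) ≠ 0 := ne_of_gt hr
  have hq2 : q ^ 2 = rp ^ 2 * (1 + 3 * lam * rp ^ 2) - a ^ 2 * (1 - lam * rp ^ 2) := by
    rw [eq_div_iff hr0] at hcon
    linarith [hcon]
  have hQ4 : Q ^ 4 = (q ^ 2) ^ 2 / Ξ ^ 4 := by rw [hQ]; ring
  have hQ2 : Q ^ 2 = q ^ 2 / Ξ ^ 2 := by rw [hQ]; ring
  rw [hQ4, hQ2, hq2, hJ, hAE, hΞ]
  have h0 : (1 - lam * a ^ 2) ≠ 0 := by linarith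
  field_simp
  ring
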